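/- With B_n = B_n^0 the polynomials from the recursion n³B_n − (n+1)²(2n+1)B_{n+1} + (n+2)²(n+1)B_{n+2} = t³B_n (B_0 = 1, B_1 = 0), one has B_n^1(t) = ∑_{k=0}^n B_k(t) for all n ≥ 0. -/

import Mathlib

open scoped BigOperators

/-- The Pochhammer symbol (rising factorial) (a)_n. -/
noncomputable def poch (a : ℂ) (n : ℕ) : ℂ := (ascPochhammer ℂ n).eval a

/-- ω = e^{2πi/3}. -/
noncomputable def ω : ℂ := Complex.exp (2 * Real.pi * Complex.I / 3)

/-- The polynomials B_n^α(t). -/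
noncomputable def Ba (α t : ℂ) (n : ℕ) : ℂ :=
  (1 / (Nat.factorial n : ℂ)) * ∑ k ∈ Finset.range (n + 1),
    poch (ω * t) k * poch (ω ^ 2 * t) k * poch (α + t) (n - k) * poch (α - t + k) (n - k)
      / ((Nat.factorial k : ℂ) * (Nat.factorial (n - k) : ℂ))

@[simp] lemma poch_zero (a : ℂ) : poch a 0 = 1 := by simp [poch]

lemma poch_succ (a : ℂ) (n : ℕ) : poch a (n+1) = poch a n * (a + n) := by
  simp [poch, ascPochhammer_succ_right]

lemma poch_succ_left (a : ℂ) (n : ℕ) : poch a (n+1) = a * poch (a+1) n := by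
  simp [poch, ascPochhammer_succ_left, Polynomial.eval_comp]

lemma term_id (t : ℂ) (k n : ℕ) (hk : k ≤ n) :
    (1/((Nat.factorial (n+1)) :ℂ)) * (poch (ω*t) k * poch (ω^2*t) k * poch ((1:ℂ)+t) ((n+1)-k) * poch ((1:ℂ) - t + k) ((n+1)-k) / ((Nat.factorial k) * (Nat.factorial ((n+1)-k))))
    - (1/((Nat.factorial (n+1)):ℂ)) * (poch (ω*t) k * poch (ω^2*t) k * poch ((0:ℂ)+t) ((n+1)-k) * poch ((0:ℂ) - t + k) ((n+1)-k)/((Nat.factorial k) * (Nat.factorial ((n+1)-k))))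
    = (1/((Nat.factorial n):ℂ)) * (poch (ω*t) k * poch (ω^2*t) k * poch ((1:ℂ)+t) (n-k) * poch ((1:ℂ) - t + k) (n-k)/((Nat.factorial k)*(Nat.factorial (n-k)))) := by
  set m := n - k with hm
  have hsub : (n+1) - k = m + 1 := by omega
  have hn : n = m + k := by omega
  rw [hsub, hn]
  have h1 : poch ((1:ℂ)+t) (m+1) = poch ((1:ℂ)+t) m * (1 + t + m) := poch_succ _ _
  have h2 : poch ((1:ℂ) - t + k) (m+1) = poch ((1:ℂ) - t + k) m * (1 - t + k + m) := poch_succ _ _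
  have h3 : poch ((0:ℂ)+t) (m+1) = t * poch ((1:ℂ)+t) m := by
    rw [zero_add, poch_succ_left]; ring_nf
  have h4 : poch ((0:ℂ) - t + k) (m+1) = (k - t) * poch ((1:ℂ) - t + k) m := by
    rw [poch_succ_left]; ring_nf
  rw [h1, h2, h3, h4]
  have f1 : ((Nat.factorial (m+k+1)) : ℂ) = (m+k+1) * (Nat.factorial (m+k)) := by
    push_cast [Nat.factorial_succ]; ring
  have f2 : ((Nat.factorial (m+1)) : ℂ) = (m+1) * (Nat.factorial m) := by
    push_cast [Nat.factorial_succ]; ring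
  have hfk : ((Nat.factorial k) : ℂ) ≠ 0 := Nat.cast_ne_zero.mpr (Nat.factorial_ne_zero k)
  have hfm : ((Nat.factorial m) : ℂ) ≠ 0 := Nat.cast_ne_zero.mpr (Nat.factorial_ne_zero m)
  have hfn : ((Nat.factorial (m+k)) : ℂ) ≠ 0 := Nat.cast_ne_zero.mpr (Nat.factorial_ne_zero _)
  have hm1 : ((m:ℂ)+1) ≠ 0 := Nat.cast_add_one_ne_zero m
  have hmk1 : ((m:ℂ)+(k:ℂ)+1) ≠ 0 := by
    have : ((m+k:ℕ):ℂ)+1 ≠ 0 := Nat.cast_add_one_ne_zero (m+k)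
    push_cast at this; exact this
  rw [f1, f2]
  field_simp
  ring

lemma step (t : ℂ) (n : ℕ) : Ba 1 t (n+1) = Ba 0 t (n+1) + Ba 1 t n := by
  have key : Ba 1 t (n+1) - Ba 0 t (n+1) = Ba 1 t n := by
    unfold Ba
    rw [Finset.mul_sum, Finset.mul_sum, Finset.mul_sum, ← Finset.sum_sub_distrib]
    rw [Finset.sum_range_succ (n := n+1)]
    have hlast : (1 / ((Nat.factorial (n+1)) : ℂ)) *
        (poch (ω*t) (n+1) * poch (ω^2*t) (n+1) * poch (1+t) ((n+1)-(n+1)) * poch (1 - t + (n+1:ℕ)) ((n+1)-(n+1)) / ((Nat.factorial (n+1)) * (Nat.factorial ((n+1)-(n+1))))) -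
        (1 / ((Nat.factorial (n+1)) : ℂ)) *
        (poch (ω*t) (n+1) * poch (ω^2*t) (n+1) * poch (0+t) ((n+1)-(n+1)) * poch (0 - t + (n+1:ℕ)) ((n+1)-(n+1)) / ((Nat.factorial (n+1)) * (Nat.factorial ((n+1)-(n+1))))) = 0 := by
      simp
    rw [hlast, add_zero]
    apply Finset.sum_congr rfl
    intro k hk
    exact term_id t k n (Nat.lt_succ_iff.mp (Finset.mem_range.mp hk))
  linear_combination key

theorem Ba_one_eq_partial_sums (t : ℂ) (n : ℕ) :
    Ba 1 t n = ∑ k ∈ Finset.range (n + 1), Ba 0 t k := by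
  induction n with
  | zero => simp [Ba]
  | succ n ih =>
    rw [Finset.sum_range_succ, ← ih, step t n]; ring
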